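/- In the amalgam setup with M of rank 4, let X ∈ 𝓛(M₁,M₂) with r(X ∩ T) ≥ 2. Then ξ(X) = η(X). -/

import Mathlib

open Set

namespace StickyKantor

variable {α : Type*}

/-- The rank of a set in a matroid, as an integer (junk value `0` when infinite). -/
noncomputable def rk (M : Matroid α) (X : Set α) : ℤ :=
  ((⨆ I ∈ {I : Set α | M.Indep I ∧ I ⊆ X}, I.encard).toNat : ℤ)

/-- The modular defect of a pair of sets. -/
noncomputable def mdefect (M : Matroid α) (X Y : Set α) : ℤ :=
  rk M X + rk M Y - rk M (X ∪ Y) - rk M (X ∩ Y)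

/-- A modular pair of sets. -/
def ModularPair (M : Matroid α) (X Y : Set α) : Prop :=
  rk M X + rk M Y = rk M (X ∪ Y) + rk M (X ∩ Y)

/-- `M'` is an extension of `M`: it has a larger ground set and restricts to `M`. -/
def IsExtension (M' M : Matroid α) : Prop :=
  M.E ⊆ M'.E ∧ M = M'.restrict M.E

/-- A point: a rank-1 flat. -/
def IsPoint (M : Matroid α) (p : Set α) : Prop := M.IsFlat p ∧ rk M p = 1

/-- A line: a rank-2 flat. -/
def IsLine (M : Matroid α) (l : Set α) : Prop := M.IsFlat l ∧ rk M l = 2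

/-- A plane: a rank-3 flat. -/
def IsPlane (M : Matroid α) (e : Set α) : Prop := M.IsFlat e ∧ rk M e = 3

/-- Two lines are coplanar if their join has rank at most 3. -/
def Coplanar (M : Matroid α) (l₁ l₂ : Set α) : Prop := rk M (l₁ ∪ l₂) ≤ 3

/-- A hyperplane: a maximal proper flat. -/
def IsHyperplane (M : Matroid α) (H : Set α) : Prop :=
  M.IsFlat H ∧ H ≠ M.E ∧ ∀ F, M.IsFlat F → H ⊂ F → F = M.E

/-- A matroid is hypermodular if every pair of hyperplanes is a modular pair. -/
def Hypermodular (M : Matroid α) : Prop :=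
  ∀ H₁ H₂, IsHyperplane M H₁ → IsHyperplane M H₂ → ModularPair M H₁ H₂

/-- A matroid is modular if every pair of flats is a modular pair. -/
def Modular (M : Matroid α) : Prop :=
  ∀ F₁ F₂, M.IsFlat F₁ → M.IsFlat F₂ → ModularPair M F₁ F₂

/-- A modular cut: an up-closed family of flats closed under intersections of
modular pairs. -/
def IsModularCut (M : Matroid α) (𝓜 : Set (Set α)) : Prop :=
  (∀ F ∈ 𝓜, M.IsFlat F) ∧
  (∀ F ∈ 𝓜, ∀ F', M.IsFlat F' → F ⊆ F' → F' ∈ 𝓜) ∧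
  (∀ F₁ ∈ 𝓜, ∀ F₂ ∈ 𝓜, ModularPair M F₁ F₂ → F₁ ∩ F₂ ∈ 𝓜)

/-- The principal modular cut of a flat `F`. -/
def principalCut (M : Matroid α) (F : Set α) : Set (Set α) :=
  {G | M.IsFlat G ∧ F ⊆ G}

/-- The modular cut generated by a family of flats. -/
def genCut (M : Matroid α) (A : Set (Set α)) : Set (Set α) :=
  ⋂₀ {𝓜 | IsModularCut M 𝓜 ∧ A ⊆ 𝓜}

/-- A non-modular pair of flats is intersectable if the modular cut it generates is
not the principal modular cut of its intersection. -/
def Intersectable (M : Matroid α) (X Y : Set α) : Prop :=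
  genCut M {X, Y} ≠ principalCut M (X ∩ Y)

/-- A matroid is OTE (only trivially extendable) if every nonempty modular cut
is principal. -/
def OTE (M : Matroid α) : Prop :=
  ∀ 𝓜, IsModularCut M 𝓜 → 𝓜 ≠ ∅ → ∃ F, M.IsFlat F ∧ 𝓜 = principalCut M F

/-- A matroid is sticky if every pair of extensions meeting exactly in its ground set
has an amalgam. -/
def Sticky (M : Matroid α) : Prop :=
  ∀ N₁ N₂ : Matroid α, IsExtension N₁ M → IsExtension N₂ M → N₁.E ∩ N₂.E = M.E →
    ∃ A : Matroid α, A.E = N₁.E ∪ N₂.E ∧ IsExtension A N₁ ∧ IsExtension A N₂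

/-- The function `η` of the amalgam construction. -/
noncomputable def eta (M M₁ M₂ : Matroid α) (X : Set α) : ℤ :=
  rk M₁ (X ∩ M₁.E) + rk M₂ (X ∩ M₂.E) - rk M (X ∩ M.E)

/-- The function `ξ` of the amalgam construction. -/
noncomputable def xi (M M₁ M₂ : Matroid α) (X : Set α) : ℤ :=
  sInf {n : ℤ | ∃ Y, X ⊆ Y ∧ Y ⊆ M₁.E ∪ M₂.E ∧ n = eta M M₁ M₂ Y}

/-- The lattice `𝓛(M₁,M₂)` of sets whose traces on both ground sets are flats. -/
def latticeL (M₁ M₂ : Matroid α) : Set (Set α) :=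
  {X | X ⊆ M₁.E ∪ M₂.E ∧ M₁.IsFlat (X ∩ M₁.E) ∧ M₂.IsFlat (X ∩ M₂.E)}

private lemma erk_eq_encard {M : Matroid α} {I X : Set α} (hI : M.IsBasis' I X) :
    (⨆ J ∈ {J : Set α | M.Indep J ∧ J ⊆ X}, J.encard) = I.encard := by
  apply le_antisymm
  · refine iSup₂_le fun J hJ => ?_
    obtain ⟨I', hI', hJI'⟩ := hJ.1.subset_isBasis'_of_subset hJ.2
    exact (encard_mono hJI').trans (hI'.encard_eq_encard hI).le
  · exact le_iSup₂ (f := fun (J : Set α) (_ : J ∈ {J : Set α | M.Indep J ∧ J ⊆ X}) => J.encard)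
      I ⟨hI.indep, hI.subset⟩

private lemma rk_eq_toNat {M : Matroid α} {I X : Set α} (hI : M.IsBasis' I X) :
    rk M X = (I.encard.toNat : ℤ) := by
  rw [rk, erk_eq_encard hI]

private lemma rk_mono (M : Matroid α) [M.RankFinite] {X Y : Set α} (h : X ⊆ Y) :
    rk M X ≤ rk M Y := by
  obtain ⟨I, hI⟩ := M.exists_isBasis' X
  obtain ⟨J, hJ⟩ := M.exists_isBasis' Y
  rw [rk_eq_toNat hI, rk_eq_toNat hJ]
  have hIJ : I.encard ≤ J.encard := by
    obtain ⟨J', hJ', hIJ'⟩ := hI.indep.subset_isBasis'_of_subset (hI.subset.trans h)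
    exact (encard_mono hIJ').trans (hJ'.encard_eq_encard hJ).le
  exact_mod_cast ENat.toNat_le_toNat hIJ hJ.indep.finite.encard_lt_top.ne

private lemma eq_of_flat_of_rk_le {M : Matroid α} [M.RankFinite] {F Y : Set α}
    (hF : M.IsFlat F) (hFY : F ⊆ Y) (hYE : Y ⊆ M.E) (hr : rk M Y ≤ rk M F) : Y = F := by
  obtain ⟨I, hI⟩ := M.exists_isBasis' F
  obtain ⟨J, hJ, hIJ⟩ := hI.indep.subset_isBasis'_of_subset (hI.subset.trans hFY)
  have hJfin : J.Finite := hJ.indep.finite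
  have hIfin : I.Finite := hI.indep.finite
  have htn : J.encard.toNat ≤ I.encard.toNat := by
    rw [rk_eq_toNat hI, rk_eq_toNat hJ] at hr
    exact_mod_cast hr
  have hle : J.encard ≤ I.encard := by
    rw [← ENat.coe_toNat hJfin.encard_lt_top.ne, ← ENat.coe_toNat hIfin.encard_lt_top.ne]
    exact_mod_cast htn
  have hJI : J = I := (hIfin.eq_of_subset_of_encard_le hIJ hle).symm
  have h1 : Y ⊆ M.closure Y := M.subset_closure Y hYE
  rw [← hJ.closure_eq_closure, hJI, hI.closure_eq_closure, hF.closure] at h1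
  exact h1.antisymm hFY

/-- in the amalgam setup over a rank-4 matroid, `ξ = η` on members of
`𝓛(M₁,M₂)` whose trace on `T` has rank at least 2. -/
theorem xi_eq_eta (M M₁ M₂ : Matroid α)
    [M.RankFinite] [M₁.RankFinite] [M₂.RankFinite]
    (hext₁ : IsExtension M₁ M) (hext₂ : IsExtension M₂ M)
    (hT : M₁.E ∩ M₂.E = M.E) (hrank : rk M M.E = 4)
    (X : Set α) (hX : X ∈ latticeL M₁ M₂) (hXT : 2 ≤ rk M (X ∩ M.E)) :
    xi M M₁ M₂ X = eta M M₁ M₂ X := by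
  obtain ⟨hXE, hXF1, hXF2⟩ := hX
  have hTE1 : M.E ⊆ M₁.E := hT ▸ inter_subset_left
  have hTE2 : M.E ⊆ M₂.E := hT ▸ inter_subset_right
  have key : ∀ Y, X ⊆ Y → eta M M₁ M₂ X ≤ eta M M₁ M₂ Y := by
    intro Y hXY
    have hmX1 : X ∩ M₁.E ⊆ Y ∩ M₁.E := inter_subset_inter_left _ hXY
    have hmX2 : X ∩ M₂.E ⊆ Y ∩ M₂.E := inter_subset_inter_left _ hXY
    have hm1 := rk_mono M₁ hmX1
    have hm2 := rk_mono M₂ hmX2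
    by_cases h1 : Y ∩ M₁.E = X ∩ M₁.E
    · have hYT : Y ∩ M.E = X ∩ M.E := by
        rw [show Y ∩ M.E = (Y ∩ M₁.E) ∩ M.E by
            rw [inter_assoc, inter_eq_self_of_subset_right hTE1],
          h1, inter_assoc, inter_eq_self_of_subset_right hTE1]
      simp only [eta, h1, hYT]
      linarith
    by_cases h2 : Y ∩ M₂.E = X ∩ M₂.E
    · have hYT : Y ∩ M.E = X ∩ M.E := by
        rw [show Y ∩ M.E = (Y ∩ M₂.E) ∩ M.E by
            rw [inter_assoc, inter_eq_self_of_subset_right hTE2],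
          h2, inter_assoc, inter_eq_self_of_subset_right hTE2]
      simp only [eta, h2, hYT]
      linarith
    have hs1 : rk M₁ (X ∩ M₁.E) + 1 ≤ rk M₁ (Y ∩ M₁.E) := by
      rcases lt_or_ge (rk M₁ (X ∩ M₁.E)) (rk M₁ (Y ∩ M₁.E)) with h | h
      · omega
      · exact absurd (eq_of_flat_of_rk_le hXF1 hmX1 inter_subset_right h) h1
    have hs2 : rk M₂ (X ∩ M₂.E) + 1 ≤ rk M₂ (Y ∩ M₂.E) := by
      rcases lt_or_ge (rk M₂ (X ∩ M₂.E)) (rk M₂ (Y ∩ M₂.E)) with h | h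
      · omega
      · exact absurd (eq_of_flat_of_rk_le hXF2 hmX2 inter_subset_right h) h2
    have hb : rk M (Y ∩ M.E) ≤ 4 := hrank ▸ rk_mono M inter_subset_right
    simp only [eta]
    linarith
  have hmem : eta M M₁ M₂ X ∈
      {n : ℤ | ∃ Y, X ⊆ Y ∧ Y ⊆ M₁.E ∪ M₂.E ∧ n = eta M M₁ M₂ Y} :=
    ⟨X, Subset.rfl, hXE, rfl⟩
  have hlb : ∀ n ∈ {n : ℤ | ∃ Y, X ⊆ Y ∧ Y ⊆ M₁.E ∪ M₂.E ∧ n = eta M M₁ M₂ Y},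
      eta M M₁ M₂ X ≤ n := by
    rintro n ⟨Y, hXY, -, rfl⟩
    exact key Y hXY
  exact le_antisymm (csInf_le ⟨_, hlb⟩ hmem) (le_csInf ⟨_, hmem⟩ hlb)
end StickyKantor
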